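/- Let S be a multiset of segments partitioned as S = ⋃ᵢ Sᵢ, with Pᵢ the set of endpoints of Sᵢ. If for all i ≠ j no segment with both endpoints in Pᵢ crosses any segment with both endpoints in Pⱼ, then any flip performed within Sᵢ (removing two crossing segments of Sᵢ and inserting two segments with endpoints in Pᵢ) preserves this property and does not create any crossing between a segment of Sᵢ and a segment of Sⱼ for j ≠ i. -/
import Mathlib


abbrev Plane := EuclideanSpace ℝ (Fin 2)

open scoped Classical

/-- Two segments cross: they intersect in exactly one point, which is interior to both. -/
def SegCross (a b c d : Plane) : Prop :=
  ∃ x, segment ℝ a b ∩ segment ℝ c d = {x} ∧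
    x ∈ openSegment ℝ a b ∧ x ∈ openSegment ℝ c d

/-- The set of endpoints of a multiset of segments (segments given as pairs of points). -/
def endpoints (S : Multiset (Plane × Plane)) : Set Plane :=
  {x | ∃ s ∈ S, x = s.1 ∨ x = s.2}

/-- Splitting lemma: if no segment spanned by the endpoints of one part crosses a
segment spanned by the endpoints of another part, then a flip performed inside one
part preserves this property, and in particular creates no crossing between parts. -/
theorem splitting_lemma {ι : Type*} [DecidableEq ι] (S : ι → Multiset (Plane × Plane))
    (hsep : ∀ i j : ι, i ≠ j → ∀ a b c d : Plane,
      a ∈ endpoints (S i) → b ∈ endpoints (S i) →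
      c ∈ endpoints (S j) → d ∈ endpoints (S j) → ¬ SegCross a b c d)
    (i : ι) (a b c d : Plane)
    (hab : (a, b) ∈ S i) (hcd : (c, d) ∈ S i) (hcross : SegCross a b c d)
    (S' : ι → Multiset (Plane × Plane))
    (hS' : (S' = fun k => if k = i then
        ((S i).erase (a, b)).erase (c, d) + {(a, c), (b, d)} else S k) ∨
      (S' = fun k => if k = i then
        ((S i).erase (a, b)).erase (c, d) + {(a, d), (b, c)} else S k)) :
    ∀ j k : ι, j ≠ k → ∀ a' b' c' d' : Plane,
      a' ∈ endpoints (S' j) → b' ∈ endpoints (S' j) →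
      c' ∈ endpoints (S' k) → d' ∈ endpoints (S' k) → ¬ SegCross a' b' c' d' := by
  have ha : a ∈ endpoints (S i) := ⟨(a, b), hab, Or.inl rfl⟩
  have hb : b ∈ endpoints (S i) := ⟨(a, b), hab, Or.inr rfl⟩
  have hc : c ∈ endpoints (S i) := ⟨(c, d), hcd, Or.inl rfl⟩
  have hd : d ∈ endpoints (S i) := ⟨(c, d), hcd, Or.inr rfl⟩
  have hsub : ∀ k, endpoints (S' k) ⊆ endpoints (S k) := by
    intro k x hx
    obtain ⟨s, hs, hxs⟩ := hx
    rcases hS' with h | h <;> subst h <;> by_cases hk : k = i <;>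
        simp only [hk, if_pos, if_neg, if_true] at hs
    · subst hk
      rcases Multiset.mem_add.1 hs with h1 | h2
      · exact ⟨s, Multiset.mem_of_mem_erase (Multiset.mem_of_mem_erase h1), hxs⟩
      · simp only [Multiset.insert_eq_cons, Multiset.mem_cons, Multiset.mem_singleton] at h2
        rcases h2 with rfl | rfl <;> rcases hxs with rfl | rfl <;> assumption
    · exact ⟨s, hs, hxs⟩
    · subst hk
      rcases Multiset.mem_add.1 hs with h1 | h2
      · exact ⟨s, Multiset.mem_of_mem_erase (Multiset.mem_of_mem_erase h1), hxs⟩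
      · simp only [Multiset.insert_eq_cons, Multiset.mem_cons, Multiset.mem_singleton] at h2
        rcases h2 with rfl | rfl <;> rcases hxs with rfl | rfl <;> assumption
    · exact ⟨s, hs, hxs⟩
  intro j k hjk a' b' c' d' ha' hb' hc' hd'
  exact hsep j k hjk a' b' c' d' (hsub j ha') (hsub j hb') (hsub k hc') (hsub k hd')
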